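/- arXiv:2211.11235 — 2 statements merged into one kernel-verified Lean document; each statement's English description precedes it below -/
import Mathlib

section
/- Let d ≥ 2 and ℓ ≥ 2 be integers, 𝒜_(d) = {a_1, …, a_d}, and let σ: 𝒜_(d)* → 𝒜_(d)* be any morphism whose incidence matrix is M(σ) = ℓ·I_d + 1_{d×d} (I_d the d×d identity matrix, 1_{d×d} the all-ones d×d matrix). Then σ is recognizable in the full shift 𝒜_(d)^ℤ. -/
open MeasureTheory Filter
open scoped ENNReal

namespace SAdicPaper

universe u v

/-- Biinfinite words over the alphabet `A`. -/
def ZWord (A : Type u) : Type u := ℤ → A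

noncomputable instance {A : Type u} : TopologicalSpace (ZWord A) :=
  @Pi.topologicalSpace ℤ (fun _ => A) (fun _ => ⊥)

instance {A : Type u} : MeasurableSpace (ZWord A) :=
  @MeasurableSpace.pi ℤ (fun _ => A) (fun _ => ⊤)

instance finAddTwoNonempty (n : ℕ) : Nonempty (Fin (n + 2)) := ⟨⟨0, by omega⟩⟩

variable {A : Type u} {B : Type v}

/-- The shift map `T`. -/
def shift (x : ZWord A) : ZWord A := fun i => x (i + 1)

/-- Shift by an arbitrary integer amount. -/
def shiftBy (m : ℤ) (x : ZWord A) : ZWord A := fun i => x (i + m)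

/-- A subshift: a non-empty, closed, shift-invariant set of biinfinite words. -/
def IsSubshift (X : Set (ZWord A)) : Prop :=
  X.Nonempty ∧ IsClosed X ∧ shift '' X = X

/-- The finite subword of `x` of length `n` starting at position `k`. -/
def subword (x : ZWord A) (k : ℤ) (n : ℕ) : List A :=
  (List.range n).map fun i => x (k + i)

/-- The language of finite factors of elements of `X`. -/
def lang (X : Set (ZWord A)) : Set (List A) :=
  { w | ∃ x ∈ X, ∃ k : ℤ, w = subword x k w.length }

/-- The subshift generated by a language. -/
def subshiftGen (L : Set (List A)) : Set (ZWord A) :=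
  { x | ∀ (k : ℤ) (n : ℕ), ∃ u ∈ L, subword x k n <:+: u }

/-- Extension of a letter map `σ : A → List B` to words: the free monoid morphism. -/
def wordMap (σ : A → List B) (w : List A) : List B := (w.map σ).flatten

/-- A morphism is non-erasing if no letter is mapped to the empty word. -/
def NonErasing (σ : A → List B) : Prop := ∀ a, σ a ≠ []

/-- The image subshift `σ(X)`. -/
def imageSubshift (σ : A → List B) (X : Set (ZWord A)) : Set (ZWord B) :=
  subshiftGen (wordMap σ '' lang X)

/-- The position at which the `σ`-image of the letter of `x` at index `n` starts
(the image of the letter at index 1 starts at index 1). -/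
noncomputable def offset (σ : A → List B) (x : ZWord A) (n : ℤ) : ℤ :=
  if 1 ≤ n then 1 + ∑ i ∈ Finset.Ico (1 : ℤ) n, ((σ (x i)).length : ℤ)
  else 1 - ∑ i ∈ Finset.Ico n (1 : ℤ), ((σ (x i)).length : ℤ)

/-- The induced map `σ^ℤ` on biinfinite words. -/
noncomputable def sigmaZ [Nonempty B] (σ : A → List B) (x : ZWord A) : ZWord B := fun j =>
  let n := Classical.epsilon fun n : ℤ => offset σ x n ≤ j ∧ j < offset σ x (n + 1)
  (σ (x n)).getD (j - offset σ x n).toNat (Classical.arbitrary B)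

/-- The cylinder `[w]`: biinfinite words `x` with `x₁ ⋯ x_{|w|} = w`. -/
def cylinder (w : List A) : Set (ZWord A) :=
  { x | ∀ i : Fin w.length, x (((i : ℕ) : ℤ) + 1) = w.get i }

/-- Shift-invariance of a measure. -/
def ShiftInvariantM (μ : Measure (ZWord A)) : Prop :=
  ∀ S : Set (ZWord A), MeasurableSet S → μ (shift ⁻¹' S) = μ S

/-- The cone `ℳ(X)` of shift-invariant finite Borel measures supported in `X`. -/
def measureCone (X : Set (ZWord A)) : Set (Measure (ZWord A)) :=
  { μ | μ Set.univ ≠ ⊤ ∧ ShiftInvariantM μ ∧ μ Xᶜ = 0 }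

/-- The subdivision alphabet `𝒜_σ`. -/
def SubAlph (σ : A → List B) : Type u := Σ a : A, Fin (σ a).length

/-- The subdivision morphism `π_σ`. -/
def subdivMap (σ : A → List B) : A → List (SubAlph σ) :=
  fun a => (List.finRange (σ a).length).map fun k => ⟨a, k⟩

/-- The letter-to-letter map `α_σ` on letters. -/
def letterMap (σ : A → List B) : SubAlph σ → B := fun p => (σ p.1).get p.2

/-- The letter-to-letter morphism `α_σ`. -/
def alphaMap (σ : A → List B) : SubAlph σ → List B := fun p => [letterMap σ p]

/-- The map `α_σ^ℤ` on biinfinite words. -/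
def alphaZ (σ : A → List B) : ZWord (SubAlph σ) → ZWord B := fun y i => letterMap σ (y i)

/-- The measure transfer map `σ^ℳ`: the push-forward under `α_σ` of the
subdivision measure `μ^{π_σ}` (realized concretely on the subdivision full shift). -/
noncomputable def transfer (σ : A → List B) (μ : Measure (ZWord A)) : Measure (ZWord B) :=
  letI := Classical.propDecidable (Nonempty (SubAlph σ))
  if h : Nonempty (SubAlph σ) then
    haveI := h
    Measure.map (alphaZ σ)
      (Measure.sum fun k : ℕ =>
        Measure.map (fun x => shift^[k] (sigmaZ (subdivMap σ) x))
          (μ.restrict { x | k < (σ (x 1)).length }))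
  else 0

/-- Recognizability of `σ` in a subshift `X`. -/
def Recognizable [Nonempty B] (σ : A → List B) (X : Set (ZWord A)) : Prop :=
  ∀ x ∈ X, ∀ x' ∈ X, ∀ k l : ℕ,
    k < (σ (x 1)).length → l < (σ (x' 1)).length →
    shift^[k] (sigmaZ σ x) = shift^[l] (sigmaZ σ x') → x = x' ∧ k = l

/-- `x` and `y` lie in the same shift-orbit. -/
def sameOrbit (x y : ZWord A) : Prop := ∃ m : ℤ, y = shiftBy m x

/-- `σ` is shift-orbit injective in `X`. -/
def ShiftOrbitInjective [Nonempty B] (σ : A → List B) (X : Set (ZWord A)) : Prop :=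
  ∀ x ∈ X, ∀ y ∈ X, (sameOrbit (sigmaZ σ x) (sigmaZ σ y) ↔ sameOrbit x y)

/-- The periodic biinfinite word `w^{±∞}`. -/
def periodicWord (w : List A) (h : w ≠ []) : ZWord A := fun i =>
  w.get ⟨(i % (w.length : ℤ)).toNat, by
    have hl : 0 < w.length := List.length_pos_iff.mpr h
    have h1 : 0 ≤ i % (w.length : ℤ) := Int.emod_nonneg i (by exact_mod_cast hl.ne')
    have h2 : i % (w.length : ℤ) < (w.length : ℤ) := Int.emod_lt_of_pos i (by exact_mod_cast hl)
    omega⟩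

/-- A word is a proper power if `w = u^m` for some `m ≥ 2`. -/
def IsProperPower (w : List A) : Prop :=
  ∃ (u : List A) (m : ℕ), 2 ≤ m ∧ w = (List.replicate m u).flatten

/-- `σ` is shift-period preserving in `X`. -/
def ShiftPeriodPreserving (σ : A → List B) (X : Set (ZWord A)) : Prop :=
  ∀ (w : List A) (h : w ≠ []), periodicWord w h ∈ X →
    (IsProperPower w ↔ IsProperPower (wordMap σ w))

/-- The incidence matrix `M(σ)` of a morphism. -/
noncomputable def incidence (σ : A → List B) : Matrix B A ℝ :=
  letI := Classical.decEq B
  Matrix.of fun b a => ((σ a).count b : ℝ)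

/-- The number `|u|_w` of occurrences of `w` as a factor of `u`. -/
noncomputable def occ (w u : List A) : ℕ :=
  letI := Classical.decEq A
  ((List.range (u.length + 1)).filter fun i => decide ((u.drop i).take w.length = w)).length

/-- A minimal subshift. -/
def IsMinimalSubshift (X : Set (ZWord A)) : Prop :=
  IsSubshift X ∧ ∀ Y, Y ⊆ X → IsSubshift Y → Y = X

/-- A shift-invariant probability measure. -/
def IsProbInvariant (μ : Measure (ZWord A)) : Prop :=
  ShiftInvariantM μ ∧ μ Set.univ = 1

/-- An ergodic shift-invariant probability measure: not a positive linear combination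
of two distinct shift-invariant probability measures. -/
def IsErgodicMeasure (μ : Measure (ZWord A)) : Prop :=
  IsProbInvariant μ ∧
    ∀ ν₁ ν₂ : Measure (ZWord A), IsProbInvariant ν₁ → IsProbInvariant ν₂ →
      ∀ c₁ c₂ : ℝ≥0∞, 0 < c₁ → 0 < c₂ → μ = c₁ • ν₁ + c₂ • ν₂ → ν₁ = ν₂

/-- Aperiodicity: no shift-periodic word in `X`. -/
def Aperiodic (X : Set (ZWord A)) : Prop :=
  ∀ x ∈ X, ∀ p : ℕ, 0 < p → shift^[p] x ≠ x

/-- Unique ergodicity of a subshift `X`. -/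
def UniquelyErgodic (X : Set (ZWord A)) : Prop :=
  ∃! μ : Measure (ZWord A), IsErgodicMeasure μ ∧ μ ∈ measureCone X

/-- The complexity function `p_X(n)`. -/
noncomputable def complexity (X : Set (ZWord A)) (n : ℕ) : ℕ :=
  Set.ncard { w : List A | w ∈ lang X ∧ w.length = n }

/-- The letter frequency vector of a measure. -/
noncomputable def freqMap (μ : Measure (ZWord A)) : A → ℝ := fun a => (μ (cylinder [a])).toReal

/-- The letter frequency cone `𝒞(X)`. -/
def letterFreqCone (X : Set (ZWord A)) : Set (A → ℝ) := freqMap '' measureCone X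

/-- A primitive substitution: some power of the incidence matrix is positive. -/
def Primitive (τ : A → List A) : Prop :=
  ∃ p : ℕ, 0 < p ∧ ∀ a b : A, b ∈ (wordMap τ)^[p] [a]

/-- The substitutive subshift of a substitution. -/
def substitutiveSubshift (τ : A → List A) : Set (ZWord A) :=
  { x | ∀ (k : ℤ) (m : ℕ), ∃ (p : ℕ) (a : A), 1 ≤ p ∧ subword x k m <:+: (wordMap τ)^[p] [a] }

section Directive

variable {𝒜 : ℕ → Type u}

/-- The telescoped morphism `σ_{[0,n)}`, on letters. -/
def teleW (σ : ∀ n, 𝒜 (n+1) → List (𝒜 n)) : (n : ℕ) → 𝒜 n → List (𝒜 0)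
  | 0, a => [a]
  | n+1, a => wordMap (teleW σ n) (σ n a)

/-- The telescoped morphism `σ_{[k,k+m)}`, on letters. -/
def teleWFrom (σ : ∀ n, 𝒜 (n+1) → List (𝒜 n)) (k : ℕ) : (m : ℕ) → 𝒜 (k + m) → List (𝒜 k)
  | 0, a => [a]
  | m+1, a => wordMap (teleWFrom σ k m) (σ (k + m) a)

/-- An everywhere growing directive sequence. -/
def EverywhereGrowing (σ : ∀ n, 𝒜 (n+1) → List (𝒜 n)) : Prop :=
  ∀ N : ℕ, ∃ n₀ : ℕ, ∀ n, n₀ ≤ n → ∀ a : 𝒜 n, N ≤ (teleW σ n a).length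

/-- The subshift generated by a directive sequence. -/
def genSubshift (σ : ∀ n, 𝒜 (n+1) → List (𝒜 n)) : Set (ZWord (𝒜 0)) :=
  { x | ∀ (k : ℤ) (m : ℕ), ∃ n : ℕ, 1 ≤ n ∧ ∃ a : 𝒜 n, subword x k m <:+: teleW σ n a }

/-- The level-`k` subshift of a directive sequence. -/
def levelSubshift (σ : ∀ n, 𝒜 (n+1) → List (𝒜 n)) (k : ℕ) : Set (ZWord (𝒜 k)) :=
  genSubshift (𝒜 := fun n => 𝒜 (k + n)) (fun n => σ (k + n))

/-- A vector tower on a directive sequence. -/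
def IsVectorTower [∀ n, Fintype (𝒜 n)] (σ : ∀ n, 𝒜 (n+1) → List (𝒜 n))
    (v : ∀ n, 𝒜 n → ℝ) : Prop :=
  (∀ n a, 0 ≤ v n a) ∧ ∀ n, v n = (incidence (σ n)).mulVec (v (n+1))

/-- `μ = 𝔪(v)` is the invariant measure on the generated subshift obtained by
evaluating the vector tower `v`. -/
def IsTowerMeasure [∀ n, Fintype (𝒜 n)] (σ : ∀ n, 𝒜 (n+1) → List (𝒜 n))
    (v : ∀ n, 𝒜 n → ℝ) (μ : Measure (ZWord (𝒜 0))) : Prop :=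
  μ ∈ measureCone (genSubshift σ) ∧
    ∀ w : List (𝒜 0),
      Tendsto (fun n => ∑ a : 𝒜 n, v n a * (occ w (teleW σ n a) : ℝ)) atTop
        (nhds ((μ (cylinder w)).toReal))

/-- A measure tower on a directive sequence. -/
def IsMeasureTower (σ : ∀ n, 𝒜 (n+1) → List (𝒜 n))
    (μs : ∀ n, Measure (ZWord (𝒜 n))) : Prop :=
  (∀ n, μs n ∈ measureCone (Set.univ : Set (ZWord (𝒜 n)))) ∧
    ∀ n, μs n = transfer (σ n) (μs (n+1))

/-- The intermediate letter frequency cone `𝒞_n`. -/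
def freqConeAt [∀ n, Fintype (𝒜 n)] (σ : ∀ n, 𝒜 (n+1) → List (𝒜 n)) (n : ℕ) :
    Set (𝒜 n → ℝ) :=
  ⋂ m : ℕ, (incidence (teleWFrom σ n (m+1))).mulVec '' { v | ∀ a, 0 ≤ v a }

/-- The dimension `c_n` of the intermediate letter frequency cone. -/
noncomputable def dimC [∀ n, Fintype (𝒜 n)] (σ : ∀ n, 𝒜 (n+1) → List (𝒜 n)) (n : ℕ) : ℕ :=
  Module.finrank ℝ (Submodule.span ℝ (freqConeAt σ n))

end Directive

section Prolong

variable {B : Type u} {𝒜 : ℕ → Type u}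

/-- Alphabets of the prolonged directive sequence `⃖σ^τ`. -/
def prolongA (B : Type u) (𝒜 : ℕ → Type u) : ℕ → Type u
  | 0 => B
  | n+1 => 𝒜 n

instance prolongAFintype [Fintype B] [∀ n, Fintype (𝒜 n)] :
    ∀ n, Fintype (prolongA B 𝒜 n)
  | 0 => inferInstanceAs (Fintype B)
  | n+1 => inferInstanceAs (Fintype (𝒜 n))

/-- The prolonged directive sequence `⃖σ^τ`. -/
def prolongSeq (τ : 𝒜 0 → List B) (σ : ∀ n, 𝒜 (n+1) → List (𝒜 n)) :
    ∀ n, prolongA B 𝒜 (n+1) → List (prolongA B 𝒜 n)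
  | 0 => τ
  | n+1 => σ n

/-- The prolonged vector tower `⃖v^τ`. -/
noncomputable def prolongTower [Fintype (𝒜 0)] (τ : 𝒜 0 → List B) (v : ∀ n, 𝒜 n → ℝ) :
    ∀ n, prolongA B 𝒜 n → ℝ
  | 0 => (incidence τ).mulVec (v 0)
  | n+1 => v n

end Prolong

/-- The morphism `τ_d : 𝒜_{d+1}* → 𝒜_d*`, `a_i ↦ a_i a_i` (i ≤ d), `a_{d+1} ↦ a_1 ⋯ a_d`. -/
def tauMap (d : ℕ) : Fin (d+1) → List (Fin d) := fun i =>
  if h : (i : ℕ) < d then [⟨i, h⟩, ⟨i, h⟩] else List.ofFn (fun j : Fin d => j)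

/-- Sizes of the alphabets of the alternating sequence `σ₂ ∘ τ₂ ∘ σ₃ ∘ τ₃ ∘ ⋯`. -/
def sz (n : ℕ) : ℕ := n / 2 + 2

/-- The alternating directive sequence `σ₂ ∘ τ₂ ∘ σ₃ ∘ τ₃ ∘ ⋯`. -/
def altSeq (σfam : ∀ d, Fin d → List (Fin d)) (n : ℕ) : Fin (sz (n+1)) → List (Fin (sz n)) :=
  fun a =>
    if h : n % 2 = 0 then
      σfam (sz n) (Fin.cast (by simp only [sz]; omega) a)
    else
      tauMap (sz n) (Fin.cast (by simp only [sz]; omega) a)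


section Statement16Helpers

private lemma getElem_congr_list {α : Type*} {l l' : List α} (h : l = l') {i : ℕ}
    (hi : i < l.length) : l[i] = l'[i]'(h ▸ hi) := by subst h; rfl

private lemma getElem_index_congr {α : Type*} (l : List α) {i j : ℕ} (h : i = j)
    (hi : i < l.length) : l[i] = l[j]'(h ▸ hi) := by subst h; rfl

private lemma length_eq_sum_count {α : Type*} [Fintype α] [DecidableEq α] [BEq α]
    [LawfulBEq α] (l : List α) :
    l.length = ∑ a, l.count a := by
  induction l with
  | nil => simp
  | cons x t ih =>
    simp only [List.length_cons, List.count_cons, ih, Finset.sum_add_distrib, beq_iff_eq]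
    have h1 : (∑ a : α, if x = a then 1 else 0) = 1 := by
      rw [Finset.sum_ite_eq Finset.univ x (fun _ => 1)]; simp
    omega

private lemma two_le_count {α : Type*} [BEq α] [LawfulBEq α] {l : List α} {e : α} {i j : ℕ}
    (hi : i < l.length) (hj : j < l.length) (hne : i ≠ j)
    (hie : l[i] = e) (hje : l[j] = e) : 2 ≤ l.count e := by
  wlog hij : i < j generalizing i j
  · exact this hj hi (Ne.symm hne) hje hie (by omega)
  have h1 : e ∈ l.take j := by
    rw [List.mem_iff_getElem]
    exact ⟨i, by rw [List.length_take]; omega, by rw [List.getElem_take]; exact hie⟩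
  have h2 : e ∈ l.drop j := by
    rw [List.mem_iff_getElem]
    refine ⟨0, by rw [List.length_drop]; omega, ?_⟩
    rw [List.getElem_drop]; simpa using hje
  have a1 := List.count_pos_iff.mpr h1
  have a2 := List.count_pos_iff.mpr h2
  have hsplit : l.count e = (l.take j).count e + (l.drop j).count e := by
    rw [← List.count_append, List.take_append_drop]
  omega

private lemma sigma_len {d ℓ : ℕ} (σ : Fin d → List (Fin d))
    (hM : ∀ i j : Fin d, (σ j).count i = if i = j then ℓ + 1 else 1) (a : Fin d) :
    (σ a).length = ℓ + d := by
  rw [length_eq_sum_count (σ a), Finset.sum_congr rfl (fun i _ => hM i a)]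
  have h : ∀ i : Fin d, (if i = a then ℓ + 1 else 1) = (if i = a then ℓ else 0) + 1 := by
    intro i; split_ifs <;> rfl
  simp_rw [h]
  rw [Finset.sum_add_distrib, Finset.sum_ite_eq' Finset.univ a fun _ => ℓ]
  simp

private lemma core {d ℓ : ℕ} (hd : 2 ≤ d) (hℓ : 2 ≤ ℓ) (σ : Fin d → List (Fin d))
    (hM : ∀ i j : Fin d, (σ j).count i = if i = j then ℓ + 1 else 1)
    (hlen : ∀ a, (σ a).length = ℓ + d)
    {s : ℕ} (hs0 : 0 < s) (hsL : s < ℓ + d) {a b c : Fin d}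
    (hw : σ c = (σ a).drop s ++ (σ b).take s) : False := by
  set L := ℓ + d with hLdef
  have hdcard : 1 < Fintype.card (Fin d) := by simpa using by omega
  have exful : ∀ e f : Fin d, e ≠ f → (σ f).count e = 1 := fun e f h => by
    rw [hM]; simp [h]
  have cself : ∀ e : Fin d, (σ e).count e = ℓ + 1 := fun e => by rw [hM]; simp
  by_cases hab : a = b
  · subst hab
    have hrot : σ c = (σ a).rotate s := by
      rw [List.rotate_eq_drop_append_take (by rw [hlen]; omega)]; exact hw
    by_cases hca : c = a
    · subst hca
      obtain ⟨e, he⟩ := Fintype.exists_ne_of_one_lt_card hdcard c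
      have hc1 : (σ c).count e = 1 := exful e c he
      have hmem : e ∈ σ c := List.count_pos_iff.mp (by omega)
      obtain ⟨q, hq, hqe⟩ := List.mem_iff_getElem.mp hmem
      rw [hlen] at hq
      have hrel : ∀ i, ∀ _ : i < L, (σ c)[i]'(by rw [hlen]; omega) =
          (σ c)[(i + s) % L]'(by rw [hlen]; exact Nat.mod_lt _ (by omega)) := by
        intro i hiL
        refine (getElem_congr_list hrot (by rw [hlen]; omega)).trans ?_
        refine (List.getElem_rotate (σ c) s i _).trans ?_
        exact getElem_index_congr (σ c) (by rw [hlen]) (by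
          rw [hlen]
          exact Nat.mod_lt _ (by omega))
      set q2 := (q + (L - s)) % L with hq2def
      have hq2L : q2 < L := Nat.mod_lt _ (by omega)
      have hmod : (q2 + s) % L = q := by
        rw [hq2def, Nat.mod_add_mod]
        have h1 : q + (L - s) + s = q + L := by omega
        rw [h1, Nat.add_mod_right, Nat.mod_eq_of_lt hq]
      have hq2e : (σ c)[q2]'(by rw [hlen]; omega) = e := by
        have h2 := hrel q2 hq2L
        rw [h2]
        have h3 : ∀ m, ∀ hm : m < (σ c).length, m = q → (σ c)[m]'hm = e := by
          intro m hm hmq; subst hmq; exact hqe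
        exact h3 _ _ hmod
      have hqq2 : q ≠ q2 := by
        intro hEq
        rcases Nat.lt_or_ge (q + (L - s)) L with h1 | h1
        · rw [hq2def, Nat.mod_eq_of_lt h1] at hEq; omega
        · have h2 : q + (L - s) - L < L := by omega
          rw [hq2def, Nat.mod_eq_sub_mod h1, Nat.mod_eq_of_lt h2] at hEq; omega
      have := two_le_count (l := σ c) (e := e)
        (by rw [hlen]; omega) (by rw [hlen]; omega) hqq2 hqe hq2e
      omega
    · have h1 : (σ c).count c = (σ a).count c := by
        rw [hrot]; exact ((σ a).rotate_perm s).count_eq c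
      rw [cself, exful c a hca] at h1; omega
  · by_cases hca : c = a
    · -- Case A: c = a ≠ b, σ c = (σ c).drop s ++ (σ b).take s
      subst hca
      have hcb : c ≠ b := hab
      have key0 : ∀ j, j < L - s → (σ c)[j]? = (σ c)[s + j]? := by
        intro j hj
        conv_lhs => rw [hw]
        rw [List.getElem?_append_left (by rw [List.length_drop, hlen]; omega),
          List.getElem?_drop]
      have key : ∀ j, ∀ _ : j < L - s, (σ c)[j]'(by rw [hlen]; omega) =
          (σ c)[s + j]'(by rw [hlen]; omega) := by
        intro j hj
        have h0 := key0 j hj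
        rw [List.getElem?_eq_getElem (by rw [hlen]; omega : j < (σ c).length),
          List.getElem?_eq_getElem (by rw [hlen]; omega : s + j < (σ c).length)] at h0
        exact Option.some.inj h0
      have claimA : ∀ j, ∀ _ : j < L - s, (σ c)[j]'(by rw [hlen]; omega) = c := by
        intro j hj
        by_contra hec
        have h2 := key j hj
        have hcnt := two_le_count (l := σ c) (e := (σ c)[j]'(by rw [hlen]; omega))
          (i := j) (j := s + j) (by rw [hlen]; omega) (by rw [hlen]; omega)
          (by omega) rfl h2.symm
        rw [exful _ c hec] at hcnt; omega
      rcases le_or_gt s (L - s) with hbr | hbr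
      · -- all letters equal c, contradiction with existence of e ≠ c in σ c
        have hall : ∀ j, ∀ _ : j < L, (σ c)[j]'(by rw [hlen]; omega) = c := by
          intro j hj
          rcases Nat.lt_or_ge j (L - s) with h | h
          · exact claimA j h
          · have h2 : j - s < L - s := by omega
            exact (getElem_index_congr (σ c) (show j = s + (j - s) by omega)
              (by rw [hlen]; omega)).trans ((key (j - s) h2).symm.trans (claimA (j - s) h2))
        obtain ⟨e, he⟩ := Fintype.exists_ne_of_one_lt_card hdcard c
        have hmem : e ∈ σ c := List.count_pos_iff.mp (by rw [exful e c he]; omega)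
        obtain ⟨q, hq, hqe⟩ := List.mem_iff_getElem.mp hmem
        exact he (by rw [← hqe, hall q (by rw [hlen] at hq; omega)])
      · -- s > L - s : counting
        have htb : ((σ b).take s).count c ≤ 1 := by
          calc ((σ b).take s).count c ≤ (σ b).count c := (List.take_sublist s (σ b)).count_le c
            _ = 1 := exful c b hcb
        have hsum : ℓ + 1 = ((σ c).drop s).count c + ((σ b).take s).count c := by
          have h0 := congrArg (List.count c) hw
          rw [cself, List.count_append] at h0; exact h0
        have hdropbig : ℓ ≤ ((σ c).drop s).count c := by omega
        have hLs2 : ℓ ≤ L - s := by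
          have h0 := List.count_le_length (a := c) (l := (σ c).drop s)
          rw [List.length_drop, hlen] at h0; omega
        have hrep : (σ c).take (L - s) = List.replicate (L - s) c := by
          rw [List.eq_replicate_iff]
          refine ⟨by rw [List.length_take, hlen]; omega, ?_⟩
          intro y hy
          obtain ⟨i, hi, hix⟩ := List.mem_iff_getElem.mp hy
          rw [List.length_take, hlen] at hi
          rw [List.getElem_take] at hix
          rw [← hix]; exact claimA i (by omega)
        have hsub : List.Sublist ((σ c).take (L - s)) ((σ c).take s) := by
          have h0 : (σ c).take (L - s) = ((σ c).take s).take (L - s) := by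
            rw [List.take_take]; congr 1; omega
          rw [h0]; exact List.take_sublist _ _
        have h1 : L - s ≤ ((σ c).take s).count c := by
          calc L - s = ((σ c).take (L - s)).count c := by
                rw [hrep, List.count_replicate_self]
            _ ≤ _ := hsub.count_le c
        have h2 : (σ c).count c = ((σ c).take s).count c + ((σ c).drop s).count c := by
          rw [← List.count_append, List.take_append_drop]
        rw [cself] at h2; omega
    · by_cases hcb : c = b
      · -- Case B: c = b ≠ a, σ c = (σ a).drop s ++ (σ c).take s
        subst hcb
        have key0 : ∀ j, j < s → (σ c)[(L - s) + j]? = (σ c)[j]? := by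
          intro j hj
          conv_lhs => rw [hw]
          rw [List.getElem?_append_right (by rw [List.length_drop, hlen]; omega)]
          rw [List.length_drop, hlen]
          have h0 : L - s + j - (L - s) = j := by omega
          rw [h0, List.getElem?_take, if_pos hj]
        have key : ∀ j, ∀ _ : j < s, (σ c)[(L - s) + j]'(by rw [hlen]; omega) =
            (σ c)[j]'(by rw [hlen]; omega) := by
          intro j hj
          have h0 := key0 j hj
          rw [List.getElem?_eq_getElem (by rw [hlen]; omega : (L - s) + j < (σ c).length),
            List.getElem?_eq_getElem (by rw [hlen]; omega : j < (σ c).length)] at h0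
          exact Option.some.inj h0
        have claimB : ∀ j, ∀ _ : j < s, (σ c)[j]'(by rw [hlen]; omega) = c := by
          intro j hj
          by_contra hec
          have h2 := key j hj
          have hcnt := two_le_count (l := σ c) (e := (σ c)[j]'(by rw [hlen]; omega))
            (i := j) (j := (L - s) + j) (by rw [hlen]; omega) (by rw [hlen]; omega)
            (by omega) rfl h2
          rw [exful _ c hec] at hcnt; omega
        rcases le_or_gt (L - s) s with hbr | hbr
        · have hall : ∀ j, ∀ _ : j < L, (σ c)[j]'(by rw [hlen]; omega) = c := by
            intro j hj
            rcases Nat.lt_or_ge j s with h | h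
            · exact claimB j h
            · have h2 : j - (L - s) < s := by omega
              exact (getElem_index_congr (σ c) (show j = (L - s) + (j - (L - s)) by omega)
                (by rw [hlen]; omega)).trans ((key (j - (L - s)) h2).trans (claimB (j - (L - s)) h2))
          obtain ⟨e, he⟩ := Fintype.exists_ne_of_one_lt_card hdcard c
          have hmem : e ∈ σ c := List.count_pos_iff.mp (by rw [exful e c he]; omega)
          obtain ⟨q, hq, hqe⟩ := List.mem_iff_getElem.mp hmem
          exact he (by rw [← hqe, hall q (by rw [hlen] at hq; omega)])
        · -- L - s > s : counting
          have hda : ((σ a).drop s).count c ≤ 1 := by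
            calc ((σ a).drop s).count c ≤ (σ a).count c := (List.drop_sublist s (σ a)).count_le c
              _ = 1 := exful c a hca
          have hsum : ℓ + 1 = ((σ a).drop s).count c + ((σ c).take s).count c := by
            have h0 := congrArg (List.count c) hw
            rw [cself, List.count_append] at h0; exact h0
          have htakebig : ℓ ≤ ((σ c).take s).count c := by omega
          have hsl : ℓ ≤ s := by
            have h0 := List.count_le_length (a := c) (l := (σ c).take s)
            rw [List.length_take, hlen] at h0; omega
          have hrep1 : (σ c).take s = List.replicate s c := by
            rw [List.eq_replicate_iff]
            refine ⟨by rw [List.length_take, hlen]; omega, ?_⟩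
            intro y hy
            obtain ⟨i, hi, hix⟩ := List.mem_iff_getElem.mp hy
            rw [List.length_take, hlen] at hi
            rw [List.getElem_take] at hix
            rw [← hix]; exact claimB i (by omega)
          have hrep2 : (σ c).drop (L - s) = List.replicate s c := by
            rw [List.eq_replicate_iff]
            refine ⟨by rw [List.length_drop, hlen]; omega, ?_⟩
            intro y hy
            obtain ⟨i, hi, hix⟩ := List.mem_iff_getElem.mp hy
            rw [List.length_drop, hlen] at hi
            rw [List.getElem_drop] at hix
            have h3 := key i (by omega)
            rw [← hix, h3]; exact claimB i (by omega)
          have hsub : List.Sublist ((σ c).drop (L - s)) ((σ c).drop s) := by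
            have h0 : (σ c).drop (L - s) = ((σ c).drop s).drop (L - s - s) := by
              rw [List.drop_drop]; congr 1; omega
            rw [h0]; exact List.drop_sublist _ _
          have h1 : s ≤ ((σ c).drop s).count c := by
            calc s = ((σ c).drop (L - s)).count c := by rw [hrep2, List.count_replicate_self]
              _ ≤ _ := hsub.count_le c
          have h1' : s ≤ ((σ c).take s).count c := by rw [hrep1, List.count_replicate_self]
          have h2 : (σ c).count c = ((σ c).take s).count c + ((σ c).drop s).count c := by
            rw [← List.count_append, List.take_append_drop]
          rw [cself] at h2; omega
      · -- c ∉ {a, b}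
        have h0 := congrArg (List.count c) hw
        rw [cself, List.count_append] at h0
        have h1 : ((σ a).drop s).count c ≤ 1 := by
          calc ((σ a).drop s).count c ≤ (σ a).count c := (List.drop_sublist s (σ a)).count_le c
            _ = 1 := exful c a hca
        have h2 : ((σ b).take s).count c ≤ 1 := by
          calc ((σ b).take s).count c ≤ (σ b).count c := (List.take_sublist s (σ b)).count_le c
            _ = 1 := exful c b hcb
        omega

private lemma offset_const {d : ℕ} (σ : Fin d → List (Fin d)) {L : ℕ}
    (hlen : ∀ a, (σ a).length = L) (x : ZWord (Fin d)) (n : ℤ) :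
    offset σ x n = 1 + L * (n - 1) := by
  unfold offset
  split_ifs with h
  · rw [Finset.sum_congr rfl (fun i _ => by rw [hlen] : ∀ i ∈ Finset.Ico (1:ℤ) n,
      ((σ (x i)).length : ℤ) = (L : ℤ))]
    rw [Finset.sum_const, Int.card_Ico, nsmul_eq_mul, Int.toNat_of_nonneg (by omega)]
    ring
  · rw [Finset.sum_congr rfl (fun i _ => by rw [hlen] : ∀ i ∈ Finset.Ico n (1:ℤ),
      ((σ (x i)).length : ℤ) = (L : ℤ))]
    rw [Finset.sum_const, Int.card_Ico, nsmul_eq_mul, Int.toNat_of_nonneg (by omega)]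
    ring

private lemma shift_iter {A : Type*} (y : ZWord A) (k : ℕ) (i : ℤ) :
    (shift^[k] y) i = y (i + k) := by
  induction k generalizing y i with
  | zero => simp
  | succ k ih =>
    rw [Function.iterate_succ_apply, ih (shift y) i]
    show y (i + k + 1) = y (i + (k + 1 : ℕ))
    congr 1; push_cast; ring

private lemma sigmaZ_apply {d : ℕ} [inst : Nonempty (Fin d)] (σ : Fin d → List (Fin d))
    {L : ℕ} (hL : 0 < L) (hlen : ∀ a, (σ a).length = L) (x : ZWord (Fin d))
    (m : ℤ) (i : ℕ) (hi : i < L) :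
    sigmaZ σ x (1 + L * m + i) = (σ (x (m + 1))).getD i (Classical.arbitrary _) := by
  have hoff : ∀ n, offset σ x n = 1 + L * (n - 1) := offset_const σ hlen x
  have hLpos : (0 : ℤ) < L := by exact_mod_cast hL
  have hiz : (i : ℤ) < L := by exact_mod_cast hi
  have hiz0 : (0 : ℤ) ≤ i := Int.natCast_nonneg i
  set j : ℤ := 1 + L * m + i with hjdef
  have hwit : offset σ x (m + 1) ≤ j ∧ j < offset σ x (m + 1 + 1) := by
    rw [hoff, hoff]
    constructor
    · have : (m + 1 - 1 : ℤ) = m := by ring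
      rw [this]; omega
    · have : (m + 1 + 1 - 1 : ℤ) = m + 1 := by ring
      rw [this]
      have : (L : ℤ) * (m + 1) = L * m + L := by ring
      omega
  have huniq : ∀ n : ℤ, (offset σ x n ≤ j ∧ j < offset σ x (n + 1)) → n = m + 1 := by
    rintro n ⟨h1, h2⟩
    rw [hoff] at h1 h2
    rw [hjdef] at h1 h2
    rw [(by ring : (n + 1 - 1 : ℤ) = n)] at h2
    have hlow : m < n := by
      by_contra hc
      push_neg at hc
      have h3 : (L : ℤ) * n ≤ L * m := mul_le_mul_of_nonneg_left hc hLpos.le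
      omega
    have hhigh : n ≤ m + 1 := by
      by_contra hc
      push_neg at hc
      have h4 : (m + 1 : ℤ) ≤ n - 1 := by omega
      have h5 : (L : ℤ) * (m + 1) ≤ L * (n - 1) := mul_le_mul_of_nonneg_left h4 hLpos.le
      have h6 : (L : ℤ) * (m + 1) = L * m + L := by ring
      omega
    omega
  have hepsilon : (Classical.epsilon fun n : ℤ =>
      offset σ x n ≤ j ∧ j < offset σ x (n + 1)) = m + 1 :=
    huniq _ (Classical.epsilon_spec (⟨m + 1, hwit⟩ : ∃ n : ℤ,
      offset σ x n ≤ j ∧ j < offset σ x (n + 1)))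
  show sigmaZ σ x j = _
  simp only [sigmaZ]
  rw [hepsilon, hoff]
  have h6 : (j - (1 + L * (m + 1 - 1))).toNat = i := by
    have : (m + 1 - 1 : ℤ) = m := by ring
    rw [this, hjdef]
    have : (1 + (L : ℤ) * m + i - (1 + L * m)) = i := by ring
    rw [this, Int.toNat_natCast]
  rw [h6]

private lemma aux_ne {d ℓ : ℕ} (hd : 2 ≤ d) (hℓ : 2 ≤ ℓ) [inst : Nonempty (Fin d)]
    (σ : Fin d → List (Fin d))
    (hM : ∀ i j : Fin d, (σ j).count i = if i = j then ℓ + 1 else 1)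
    (hlen : ∀ a, (σ a).length = ℓ + d)
    (x x' : ZWord (Fin d)) (k l : ℕ) (hk : k < ℓ + d)
    (hy : ∀ i : ℤ, sigmaZ σ x (i + k) = sigmaZ σ x' (i + l))
    (hlt : l < k) : False := by
  have hL0 : 0 < ℓ + d := by omega
  set δ := k - l with hδdef
  have hδ0 : 0 < δ := by omega
  have hδL : δ < ℓ + d := by omega
  have hδle : δ ≤ ℓ + d := by omega
  have hblock : σ (x' 1) = (σ (x 1)).drop δ ++ (σ (x 2)).take δ := by
    apply List.ext_getElem
    · rw [hlen, List.length_append, List.length_drop, List.length_take, hlen, hlen]; omega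
    · intro i h1 h2
      rw [hlen] at h1
      have eL : sigmaZ σ x' (1 + (i : ℤ)) = (σ (x' 1)).getD i (Classical.arbitrary _) := by
        have e := sigmaZ_apply σ hL0 hlen x' 0 i h1
        rw [show (1 + ((ℓ + d : ℕ) : ℤ) * 0 + (i : ℤ)) = 1 + (i : ℤ) by ring] at e
        rw [show ((0 : ℤ) + 1) = 1 by norm_num] at e
        exact e
      have hy' : sigmaZ σ x (1 + (i : ℤ) + δ) = sigmaZ σ x' (1 + (i : ℤ)) := by
        have h := hy (1 + (i : ℤ) - l)
        rw [show (1 + (i : ℤ) - l + l) = 1 + (i : ℤ) by ring] at h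
        rw [show (1 + (i : ℤ) - l + k) = 1 + (i : ℤ) + δ by
          rw [hδdef]; push_cast [Nat.cast_sub hlt.le]; ring] at h
        exact h
      rcases Nat.lt_or_ge (i + δ) (ℓ + d) with hc | hc
      · have eX : sigmaZ σ x (1 + (i : ℤ) + δ) =
            (σ (x 1)).getD (i + δ) (Classical.arbitrary _) := by
          have e := sigmaZ_apply σ hL0 hlen x 0 (i + δ) hc
          rw [show (1 + ((ℓ + d : ℕ) : ℤ) * 0 + ((i + δ : ℕ) : ℤ)) = 1 + (i : ℤ) + δ by
            push_cast; ring] at e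
          rw [show ((0 : ℤ) + 1) = 1 by norm_num] at e
          exact e
        have heq : (σ (x' 1)).getD i (Classical.arbitrary _) =
            (σ (x 1)).getD (i + δ) (Classical.arbitrary _) := by
          rw [← eL, ← eX, hy']
        rw [List.getD_eq_getElem (σ (x' 1)) _ (show i < (σ (x' 1)).length by
            rw [hlen]; omega),
          List.getD_eq_getElem (σ (x 1)) _ (show i + δ < (σ (x 1)).length by
            rw [hlen]; omega)] at heq
        rw [List.getElem_append_left
          (show i < (List.drop δ (σ (x 1))).length by rw [List.length_drop, hlen]; omega)]
        rw [List.getElem_drop]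
        exact heq.trans (getElem_index_congr (σ (x 1)) (show i + δ = δ + i by omega)
          (by rw [hlen]; omega))
      · have hc2 : i + δ - (ℓ + d) < ℓ + d := by omega
        have eX : sigmaZ σ x (1 + (i : ℤ) + δ) =
            (σ (x 2)).getD (i + δ - (ℓ + d)) (Classical.arbitrary _) := by
          have e := sigmaZ_apply σ hL0 hlen x 1 (i + δ - (ℓ + d)) hc2
          rw [show (1 + ((ℓ + d : ℕ) : ℤ) * 1 + ((i + δ - (ℓ + d) : ℕ) : ℤ)) =
              1 + (i : ℤ) + δ by push_cast [Nat.cast_sub hc]; ring] at e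
          rw [show ((1 : ℤ) + 1) = 2 by norm_num] at e
          exact e
        have heq : (σ (x' 1)).getD i (Classical.arbitrary _) =
            (σ (x 2)).getD (i + δ - (ℓ + d)) (Classical.arbitrary _) := by
          rw [← eL, ← eX, hy']
        rw [List.getD_eq_getElem (σ (x' 1)) _ (show i < (σ (x' 1)).length by
            rw [hlen]; omega),
          List.getD_eq_getElem (σ (x 2)) _ (show i + δ - (ℓ + d) < (σ (x 2)).length by
            rw [hlen]; omega)] at heq
        rw [List.getElem_append_right
          (show (List.drop δ (σ (x 1))).length ≤ i by rw [List.length_drop, hlen]; omega)]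
        rw [List.getElem_take]
        refine heq.trans (getElem_index_congr (σ (x 2)) ?_ (by rw [hlen]; omega))
        rw [List.length_drop, hlen]; omega
  exact core hd hℓ σ hM hlen hδ0 hδL hblock

end Statement16Helpers

/-- For `d ≥ 2`, `ℓ ≥ 2`, any morphism `σ : 𝒜_(d)* → 𝒜_(d)*` whose
incidence matrix is `M(σ) = ℓ·I_d + 1_{d×d}` is recognizable in the full shift. -/
theorem recognizable_in_full_shift_of_incidence (d : ℕ) (hd : 2 ≤ d) (ℓ : ℕ) (hℓ : 2 ≤ ℓ)
    (σ : Fin d → List (Fin d))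
    (hM : ∀ i j : Fin d, (σ j).count i = if i = j then ℓ + 1 else 1) :
    @Recognizable (Fin d) (Fin d) ⟨⟨0, by omega⟩⟩ σ (Set.univ : Set (ZWord (Fin d))) := by
  haveI inst : Nonempty (Fin d) := ⟨⟨0, by omega⟩⟩
  show Recognizable σ Set.univ
  have hlen : ∀ a, (σ a).length = ℓ + d := sigma_len σ hM
  have hL0 : 0 < ℓ + d := by omega
  intro x _ x' _ k l hk hl heq
  rw [hlen] at hk hl
  have hy : ∀ i : ℤ, sigmaZ σ x (i + k) = sigmaZ σ x' (i + l) := by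
    intro i
    rw [← shift_iter (sigmaZ σ x) k i, ← shift_iter (sigmaZ σ x') l i, heq]
  have hkl : k = l := by
    rcases lt_trichotomy k l with h | h | h
    · exact (aux_ne hd hℓ σ hM hlen x' x l k hl (fun i => (hy i).symm) h).elim
    · exact h
    · exact (aux_ne hd hℓ σ hM hlen x x' k l hk hy h).elim
  subst hkl
  refine ⟨?_, rfl⟩
  have hyy : ∀ j : ℤ, sigmaZ σ x j = sigmaZ σ x' j := by
    intro j
    have h := hy (j - k)
    rw [show (j - (k : ℤ) + k) = j by ring] at h
    exact h
  funext n
  have hblock : σ (x n) = σ (x' n) := by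
    apply List.ext_getElem (by rw [hlen, hlen])
    intro i h1 h2
    rw [hlen] at h1
    have e1 := sigmaZ_apply σ hL0 hlen x (n - 1) i h1
    have e2 := sigmaZ_apply σ hL0 hlen x' (n - 1) i h1
    rw [show (n - 1 + 1 : ℤ) = n by ring] at e1 e2
    have h := hyy (1 + ((ℓ + d : ℕ) : ℤ) * (n - 1) + i)
    rw [e1, e2] at h
    rw [List.getD_eq_getElem (σ (x n)) _ (show i < (σ (x n)).length by rw [hlen]; omega),
      List.getD_eq_getElem (σ (x' n)) _ (show i < (σ (x' n)).length by
        rw [hlen]; omega)] at h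
    exact h
  by_contra hne
  have h1 := congrArg (List.count (x n)) hblock
  rw [hM (x n) (x n), hM (x n) (x' n), if_pos rfl, if_neg hne] at h1
  omega

end SAdicPaper
end

section
/- For any integer d ≥ 2 let 𝒜_(d) = {a_1, …, a_d}, 𝒜_(d+1) = {a_1, …, a_{d+1}}, and let τ_d: 𝒜_(d+1)* → 𝒜_(d)* be the morphism a_i ↦ a_i a_i for 1 ≤ i ≤ d and a_{d+1} ↦ a_1 a_2 ⋯ a_d. Then τ_d is recognizable in every subshift X ⊆ 𝒜_(d+1)^ℤ that does not contain any of the periodic words a_i^{±∞}, 1 ≤ i ≤ d+1. -/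
open MeasureTheory Filter
open scoped ENNReal

namespace SAdicPaper

universe u v

variable {A : Type u} {B : Type v}

/-! ### Auxiliary material for Statement 17 -/

section Rec17Aux

lemma shift_iterate_apply (k : ℕ) (y : ZWord A) (j : ℤ) :
    shift^[k] y j = y (j + k) := by
  induction k generalizing j with
  | zero => simp
  | succ k ih =>
    rw [Function.iterate_succ_apply']
    show (shift^[k] y) (j + 1) = _
    rw [ih]
    congr 1
    push_cast
    ring

lemma shift_injective : Function.Injective (shift (A := A)) := by
  intro y y' h
  funext j
  have := congrFun h (j - 1)
  simpa [shift] using this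

lemma shiftBy_mem {X : Set (ZWord A)} (hX : IsSubshift X) {x : ZWord A}
    (hx : x ∈ X) (m : ℤ) : shiftBy m x ∈ X := by
  have hshift : ∀ (m : ℤ) (y : ZWord A), shift (shiftBy (m - 1) y) = shiftBy m y := by
    intro m y; funext i
    show y (i + 1 + (m - 1)) = y (i + m)
    congr 1; ring
  induction m using Int.induction_on with
  | zero =>
    have h0 : shiftBy 0 x = x := funext fun i => congrArg x (add_zero i)
    rwa [h0]
  | succ i ih =>
    have h1 : shift (shiftBy i x) = shiftBy (i + 1) x := by
      have := hshift ((i : ℤ) + 1) x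
      simpa using this
    rw [← h1, ← hX.2.2]
    exact Set.mem_image_of_mem _ ih
  | pred i ih =>
    have h1 : shift (shiftBy (-i - 1) x) = shiftBy (-i) x := hshift _ x
    have h2 : shiftBy (-(i : ℤ)) x ∈ shift '' X := by rw [hX.2.2]; exact ih
    obtain ⟨w, hw, hw2⟩ := h2
    have : w = shiftBy (-i - 1) x := shift_injective (by rw [hw2, h1])
    rwa [this] at hw

lemma offset_one (σ : A → List B) (x : ZWord A) : offset σ x 1 = 1 := by
  simp [offset]

lemma offset_succ (σ : A → List B) (x : ZWord A) (n : ℤ) :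
    offset σ x (n + 1) = offset σ x n + ((σ (x n)).length : ℤ) := by
  rcases le_or_gt 1 n with h | h
  · rw [offset, offset, if_pos h, if_pos (by omega)]
    have : Finset.Ico (1 : ℤ) (n + 1) = insert n (Finset.Ico 1 n) := by
      ext m; simp only [Finset.mem_Ico, Finset.mem_insert]; omega
    rw [this, Finset.sum_insert (by simp)]
    ring
  rcases eq_or_lt_of_le (by omega : n ≤ 0) with h0 | h0
  · subst h0
    rw [show (0 : ℤ) + 1 = 1 from rfl, offset_one, offset, if_neg (by omega)]
    rw [show Finset.Ico (0 : ℤ) 1 = {0} from rfl]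
    simp
  · rw [offset, offset, if_neg (by omega), if_neg (by omega)]
    have : Finset.Ico n (1 : ℤ) = insert n (Finset.Ico (n + 1) 1) := by
      ext m; simp only [Finset.mem_Ico, Finset.mem_insert]; omega
    rw [this, Finset.sum_insert (by simp)]
    ring

lemma offset_strictMono (σ : A → List B) (h1 : ∀ a, 1 ≤ (σ a).length)
    (x : ZWord A) : StrictMono (offset σ x) := by
  apply strictMono_int_of_lt_succ
  intro n
  rw [offset_succ]
  have := h1 (x n)
  omega

lemma offset_le_self (σ : A → List B) (h1 : ∀ a, 1 ≤ (σ a).length)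
    (x : ZWord A) {n : ℤ} (hn : n ≤ 1) : offset σ x n ≤ n := by
  rcases eq_or_lt_of_le hn with h | h
  · rw [h, offset_one]
  · rw [offset, if_neg (by omega)]
    have hcard : ((Finset.Ico n (1 : ℤ)).card : ℤ) = 1 - n := by
      rw [Int.card_Ico]; omega
    have hbd : (Finset.Ico n (1 : ℤ)).card • (1 : ℤ) ≤
        ∑ i ∈ Finset.Ico n (1 : ℤ), ((σ (x i)).length : ℤ) := by
      apply Finset.card_nsmul_le_sum
      intro i _
      exact_mod_cast h1 (x i)
    simp only [nsmul_eq_mul, mul_one] at hbd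
    omega

lemma self_le_offset (σ : A → List B) (h1 : ∀ a, 1 ≤ (σ a).length)
    (x : ZWord A) {n : ℤ} (hn : 1 ≤ n) : n ≤ offset σ x n := by
  rw [offset, if_pos hn]
  have hcard : ((Finset.Ico (1 : ℤ) n).card : ℤ) = n - 1 := by
    rw [Int.card_Ico]; omega
  have hbd : (Finset.Ico (1 : ℤ) n).card • (1 : ℤ) ≤
      ∑ i ∈ Finset.Ico (1 : ℤ) n, ((σ (x i)).length : ℤ) := by
    apply Finset.card_nsmul_le_sum
    intro i _
    exact_mod_cast h1 (x i)
  simp only [nsmul_eq_mul, mul_one] at hbd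
  omega

lemma exists_offset_le (σ : A → List B) (h1 : ∀ a, 1 ≤ (σ a).length)
    (x : ZWord A) (j : ℤ) :
    ∃ n, offset σ x n ≤ j ∧ j < offset σ x (n + 1) := by
  classical
  have Hinh : ∃ m : ℤ, j < offset σ x m := by
    refine ⟨max j 1 + 1, lt_of_lt_of_le ?_ (self_le_offset σ h1 x (by omega))⟩
    omega
  have Hbdd : ∃ b : ℤ, ∀ m : ℤ, j < offset σ x m → b ≤ m := by
    refine ⟨min j 1, fun m hm => ?_⟩
    by_contra hcon
    have : offset σ x m ≤ m := offset_le_self σ h1 x (by omega)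
    omega
  obtain ⟨lb, hlb, hmin⟩ := Int.exists_least_of_bdd Hbdd Hinh
  refine ⟨lb - 1, ?_, by simpa using hlb⟩
  by_contra hcon
  have := hmin (lb - 1) (by omega)
  omega

lemma offset_unique (σ : A → List B) (h1 : ∀ a, 1 ≤ (σ a).length)
    (x : ZWord A) {j m n : ℤ} (hm : offset σ x m ≤ j ∧ j < offset σ x (m + 1))
    (hn : offset σ x n ≤ j ∧ j < offset σ x (n + 1)) : m = n := by
  by_contra hne
  rcases lt_or_gt_of_ne hne with h | h
  · have : offset σ x (m + 1) ≤ offset σ x n :=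
      (offset_strictMono σ h1 x).monotone (by omega)
    omega
  · have : offset σ x (n + 1) ≤ offset σ x m :=
      (offset_strictMono σ h1 x).monotone (by omega)
    omega

lemma sigmaZ_toNat_lt (σ : A → List B) {x : ZWord A} {n j : ℤ}
    (hle : offset σ x n ≤ j) (hlt : j < offset σ x (n + 1)) :
    (j - offset σ x n).toNat < (σ (x n)).length := by
  rw [offset_succ] at hlt
  omega

lemma sigmaZ_eval [Nonempty B] (σ : A → List B) (h1 : ∀ a, 1 ≤ (σ a).length)
    {x : ZWord A} {n j : ℤ}
    (hle : offset σ x n ≤ j) (hlt : j < offset σ x (n + 1)) :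
    sigmaZ σ x j = (σ (x n)).get ⟨(j - offset σ x n).toNat, sigmaZ_toNat_lt σ hle hlt⟩ := by
  have hex : ∃ m : ℤ, offset σ x m ≤ j ∧ j < offset σ x (m + 1) := ⟨n, hle, hlt⟩
  have hspec := Classical.epsilon_spec hex
  have heq : Classical.epsilon (fun m : ℤ => offset σ x m ≤ j ∧ j < offset σ x (m + 1)) = n :=
    offset_unique σ h1 x hspec ⟨hle, hlt⟩
  show (σ (x _)).getD _ _ = _
  rw [heq, List.getD_eq_getElem _ _ (sigmaZ_toNat_lt σ hle hlt)]
  simp [List.get_eq_getElem]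

lemma get_congr {C : Type u} {l l' : List C} (h : l = l') {i : ℕ} (hi : i < l.length) :
    l.get ⟨i, hi⟩ = l'.get ⟨i, h ▸ hi⟩ := by subst h; rfl

/-! tauMap facts -/

lemma tauMap_length_ge {d : ℕ} (hd : 2 ≤ d) (i : Fin (d + 1)) :
    2 ≤ (tauMap d i).length := by
  unfold tauMap
  split
  · simp
  · simpa using hd

lemma tauMap_one_le {d : ℕ} (hd : 2 ≤ d) : ∀ i, 1 ≤ (tauMap d i).length :=
  fun i => le_trans (by omega) (tauMap_length_ge hd i)

lemma tauMap_get_step {d : ℕ} (hd : 2 ≤ d) (i : Fin (d + 1)) (t : ℕ)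
    (h : t + 1 < (tauMap d i).length) (h' : t < (tauMap d i).length) :
    (((tauMap d i).get ⟨t + 1, h⟩ : Fin d) : ℕ) = (((tauMap d i).get ⟨t, h'⟩ : Fin d) : ℕ) ∨
    (((tauMap d i).get ⟨t + 1, h⟩ : Fin d) : ℕ) = (((tauMap d i).get ⟨t, h'⟩ : Fin d) : ℕ) + 1 := by
  by_cases hi : (i : ℕ) < d
  · left
    have hlen : (tauMap d i).length = 2 := by simp [tauMap, hi]
    have ht : t = 0 := by omega
    subst ht
    simp [tauMap, hi]
  · right
    have hof : tauMap d i = List.ofFn (fun j : Fin d => j) := by simp [tauMap, hi]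
    simp only [List.get_eq_getElem, hof, List.getElem_ofFn]

lemma tauMap_first_eq {d : ℕ} (hd : 2 ≤ d) (i : Fin (d + 1))
    (h0 : 0 < (tauMap d i).length) (h1 : 1 < (tauMap d i).length)
    (heq : (tauMap d i).get ⟨0, h0⟩ = (tauMap d i).get ⟨1, h1⟩) :
    (i : ℕ) < d ∧ (((tauMap d i).get ⟨0, h0⟩ : Fin d) : ℕ) = (i : ℕ) := by
  by_cases hi : (i : ℕ) < d
  · refine ⟨hi, ?_⟩
    simp [tauMap, hi]
  · exfalso
    have hof : tauMap d i = List.ofFn (fun j : Fin d => j) := by simp [tauMap, hi]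
    have : ((tauMap d i).get ⟨0, h0⟩ : ℕ) = ((tauMap d i).get ⟨1, h1⟩ : ℕ) := by rw [heq]
    simp only [List.get_eq_getElem, hof, List.getElem_ofFn] at this
    simp at this

lemma tauMap_first_ne {d : ℕ} (hd : 2 ≤ d) (i : Fin (d + 1))
    (h0 : 0 < (tauMap d i).length) (h1 : 1 < (tauMap d i).length)
    (hne : (tauMap d i).get ⟨0, h0⟩ ≠ (tauMap d i).get ⟨1, h1⟩) :
    (i : ℕ) = d := by
  by_cases hi : (i : ℕ) < d
  · exfalso
    apply hne
    simp [tauMap, hi]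
  · have := i.isLt
    omega

/-! Decompositions of a biinfinite word over `Fin d` via `tauMap d` -/

def Decomp (d : ℕ) (z : ZWord (Fin d)) (x : ZWord (Fin (d + 1))) (c : ℤ) : Prop :=
  ∀ (n : ℤ) (t : ℕ) (ht : t < (tauMap d (x n)).length),
    z (offset (tauMap d) x n - c + t) = (tauMap d (x n)).get ⟨t, ht⟩

lemma decomp_of_eq {d : ℕ} (hd : 2 ≤ d) [Nonempty (Fin d)] {z : ZWord (Fin d)}
    {x : ZWord (Fin (d + 1))} {c : ℤ}
    (hz : ∀ j, z j = sigmaZ (tauMap d) x (j + c)) : Decomp d z x c := by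
  intro n t ht
  rw [hz]
  have h1 := tauMap_one_le hd
  have hle : offset (tauMap d) x n ≤ offset (tauMap d) x n - c + t + c := by omega
  have hlt : offset (tauMap d) x n - c + t + c < offset (tauMap d) x (n + 1) := by
    rw [offset_succ]
    omega
  rw [sigmaZ_eval (tauMap d) h1 hle hlt]
  have harg : (offset (tauMap d) x n - c + t + c - offset (tauMap d) x n).toNat = t := by omega
  simp only [harg]

lemma decomp_self {d : ℕ} (hd : 2 ≤ d) [Nonempty (Fin d)] (x : ZWord (Fin (d + 1))) :
    Decomp d (sigmaZ (tauMap d) x) x 0 :=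
  decomp_of_eq hd (fun j => by rw [add_zero])

lemma forced_cut {d : ℕ} (hd : 2 ≤ d) {z : ZWord (Fin d)} {x : ZWord (Fin (d + 1))} {c : ℤ}
    (hz : Decomp d z x c) (p : ℤ)
    (hnc : ∀ n : ℤ, offset (tauMap d) x n - c ≠ p + 1) :
    ((z (p + 1) : ℕ) = (z p : ℕ)) ∨ ((z (p + 1) : ℕ) = (z p : ℕ) + 1) := by
  have h1 := tauMap_one_le hd
  obtain ⟨n, hle, hlt⟩ := exists_offset_le (tauMap d) h1 x (p + c)
  have hlt' : p + 1 + c < offset (tauMap d) x (n + 1) := by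
    have := hnc (n + 1)
    omega
  have hsucc := offset_succ (tauMap d) x n
  set t : ℕ := (p - (offset (tauMap d) x n - c)).toNat with htdef
  have hp : p = offset (tauMap d) x n - c + t := by omega
  have ht1 : t + 1 < (tauMap d (x n)).length := by omega
  have ht0 : t < (tauMap d (x n)).length := by omega
  have e0 := hz n t ht0
  have e1 := hz n (t + 1) ht1
  have harg : offset (tauMap d) x n - c + ((t : ℕ) + 1 : ℕ) = p + 1 := by push_cast; omega
  rw [harg] at e1
  rw [← hp] at e0
  rw [e0, e1]
  exact tauMap_get_step hd (x n) t ht1 ht0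

lemma prop_step {d : ℕ} (hd : 2 ≤ d) {z : ZWord (Fin d)}
    {x x' : ZWord (Fin (d + 1))} {c c' : ℤ}
    (h : Decomp d z x c) (h' : Decomp d z x' c') {n n' : ℤ}
    (hcut : offset (tauMap d) x n - c = offset (tauMap d) x' n' - c') : x n = x' n' := by
  have l2 := tauMap_length_ge hd (x n)
  have l2' := tauMap_length_ge hd (x' n')
  have p0 : 0 < (tauMap d (x n)).length := by omega
  have p1 : 1 < (tauMap d (x n)).length := by omega
  have q0 : 0 < (tauMap d (x' n')).length := by omega
  have q1 : 1 < (tauMap d (x' n')).length := by omega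
  have e0 := h n 0 p0
  have e1 := h n 1 p1
  have f0 := h' n' 0 q0
  have f1 := h' n' 1 q1
  rw [hcut] at e0 e1
  have g0 : (tauMap d (x n)).get ⟨0, p0⟩ = (tauMap d (x' n')).get ⟨0, q0⟩ :=
    e0.symm.trans f0
  have g1 : (tauMap d (x n)).get ⟨1, p1⟩ = (tauMap d (x' n')).get ⟨1, q1⟩ :=
    e1.symm.trans f1
  by_cases hb : (tauMap d (x n)).get ⟨0, p0⟩ = (tauMap d (x n)).get ⟨1, p1⟩
  · obtain ⟨hx1, hx2⟩ := tauMap_first_eq hd (x n) p0 p1 hb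
    have hb' : (tauMap d (x' n')).get ⟨0, q0⟩ = (tauMap d (x' n')).get ⟨1, q1⟩ :=
      g0.symm.trans (hb.trans g1)
    obtain ⟨hy1, hy2⟩ := tauMap_first_eq hd (x' n') q0 q1 hb'
    have hval := congrArg Fin.val g0
    apply Fin.val_injective
    show ((x n : ℕ)) = ((x' n' : ℕ))
    omega
  · have hx1 := tauMap_first_ne hd (x n) p0 p1 hb
    have hb' : (tauMap d (x' n')).get ⟨0, q0⟩ ≠ (tauMap d (x' n')).get ⟨1, q1⟩ :=
      fun hcon => hb (g0.trans (hcon.trans g1.symm))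
    have hy1 := tauMap_first_ne hd (x' n') q0 q1 hb'
    apply Fin.val_injective
    show ((x n : ℕ)) = ((x' n' : ℕ))
    omega

lemma prop_chain {d : ℕ} (hd : 2 ≤ d) {z : ZWord (Fin d)}
    {x x' : ZWord (Fin (d + 1))} {c c' : ℤ}
    (h : Decomp d z x c) (h' : Decomp d z x' c') {n n' : ℤ}
    (hcut : offset (tauMap d) x n - c = offset (tauMap d) x' n' - c') :
    ∀ t : ℕ, x (n + t) = x' (n' + t) ∧
      offset (tauMap d) x (n + t) - c = offset (tauMap d) x' (n' + t) - c' := by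
  intro t
  induction t with
  | zero =>
    simp only [Nat.cast_zero, add_zero]
    exact ⟨prop_step hd h h' hcut, hcut⟩
  | succ t ih =>
    have harg : (n + ((t : ℕ) + 1 : ℕ) : ℤ) = (n + t) + 1 := by push_cast; ring
    have harg' : (n' + ((t : ℕ) + 1 : ℕ) : ℤ) = (n' + t) + 1 := by push_cast; ring
    have hcut' : offset (tauMap d) x (n + t + 1) - c = offset (tauMap d) x' (n' + t + 1) - c' := by
      rw [offset_succ, offset_succ, ih.1]
      omega
    rw [harg, harg']
    exact ⟨prop_step hd h h' hcut', hcut'⟩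

lemma left_forced {d : ℕ} (hd : 2 ≤ d) {X : Set (ZWord (Fin (d + 1)))} (hX : IsSubshift X)
    (hper : ∀ a : Fin (d + 1), ((fun _ => a) : ZWord (Fin (d + 1))) ∉ X)
    {x : ZWord (Fin (d + 1))} (hx : x ∈ X) {z : ZWord (Fin d)} (hz : Decomp d z x 0) (P : ℤ) :
    ∃ p : ℤ, p + 1 ≤ P ∧
      ¬(((z (p + 1) : ℕ) = (z p : ℕ)) ∨ ((z (p + 1) : ℕ) = (z p : ℕ) + 1)) := by
  by_contra hno
  push_neg at hno
  -- z is nondecreasing (with steps 0 or 1) left of P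
  set g : ℕ → ℕ := fun m => (z (P - 1 - m) : ℕ) with hg
  have hmono : ∀ m : ℕ, g (m + 1) ≤ g m := by
    intro m
    have hstep := hno (P - 2 - m) (by omega)
    have harg : P - 2 - (m : ℤ) + 1 = P - 1 - m := by ring
    rw [harg] at hstep
    show (z (P - 1 - ((m : ℕ) + 1 : ℕ)) : ℕ) ≤ (z (P - 1 - m) : ℕ)
    have harg2 : (P - 1 - ((m : ℕ) + 1 : ℕ) : ℤ) = P - 2 - m := by push_cast; ring
    rw [harg2]
    omega
  have hanti : Antitone g := antitone_nat_of_succ_le hmono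
  obtain ⟨m₀, hm₀⟩ : ∃ m₀, g m₀ = sInf (Set.range g) := by
    obtain ⟨m₀, h⟩ := Nat.sInf_mem (Set.range_nonempty g)
    exact ⟨m₀, h⟩
  have hconst : ∀ p : ℤ, p ≤ P - 1 - m₀ → (z p : ℕ) = g m₀ := by
    intro p hp
    have h1 : ((P - 1 - p).toNat : ℤ) = P - 1 - p := by omega
    have h2 : m₀ ≤ (P - 1 - p).toNat := by omega
    have h3 : g ((P - 1 - p).toNat) = (z p : ℕ) := by
      show (z (P - 1 - ((P - 1 - p).toNat : ℤ)) : ℕ) = _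
      rw [h1]
      congr 2
      ring
    have hle := hanti h2
    have hge : g m₀ ≤ g ((P - 1 - p).toNat) := by
      rw [hm₀]
      exact Nat.sInf_le ⟨_, rfl⟩
    omega
  have hc₀d : g m₀ < d := by
    have := (z (P - 1 - m₀)).isLt
    simpa [hg] using this
  set a : Fin (d + 1) := ⟨g m₀, by omega⟩ with ha
  have h1 := tauMap_one_le hd
  set Q : ℤ := P - 1 - m₀ with hQ
  have hxa : ∀ n : ℤ, n ≤ min Q 0 → x n = a := by
    intro n hn
    have hup : offset (tauMap d) x (n + 1) ≤ n + 1 := offset_le_self _ h1 x (by omega)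
    have hsucc := offset_succ (tauMap d) x n
    have hval : ∀ (t : ℕ) (ht : t < (tauMap d (x n)).length),
        (((tauMap d (x n)).get ⟨t, ht⟩ : Fin d) : ℕ) = g m₀ := by
      intro t ht
      rw [← hz n t ht]
      apply hconst
      omega
    by_cases hi : ((x n : ℕ)) < d
    · have hlen : (tauMap d (x n)).length = 2 := by simp [tauMap, hi]
      have e := hval 0 (by omega)
      have hof : tauMap d (x n) = [⟨x n, hi⟩, ⟨x n, hi⟩] := by simp [tauMap, hi]
      rw [get_congr hof] at e
      apply Fin.val_injective
      show ((x n : ℕ)) = g m₀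
      simpa using e
    · exfalso
      have hof : tauMap d (x n) = List.ofFn (fun j : Fin d => j) := by simp [tauMap, hi]
      have hlen : (tauMap d (x n)).length = d := by simp [hof]
      have e0 := hval 0 (by omega)
      have e1 := hval 1 (by omega)
      rw [get_congr hof] at e0 e1
      simp only [List.get_ofFn] at e0 e1
      simp at e0 e1
      omega
  set N : ℤ := min Q 0 with hN
  have hmem : ∀ m : ℕ, shiftBy (N - m) x ∈ X := fun m => shiftBy_mem hX hx _
  have htend : Filter.Tendsto (fun m : ℕ => shiftBy (N - m) x) Filter.atTop
      (nhds ((fun _ => a) : ZWord (Fin (d + 1)))) := by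
    apply tendsto_pi_nhds.mpr
    intro i
    apply Filter.Tendsto.congr' _ tendsto_const_nhds
    filter_upwards [Filter.eventually_ge_atTop i.toNat] with m hm
    show a = shiftBy (N - m) x i
    show a = x (i + (N - m))
    have : i ≤ (m : ℤ) := by omega
    exact (hxa _ (by omega)).symm
  exact hper a (hX.2.1.mem_of_tendsto htend (Filter.Eventually.of_forall hmem))

end Rec17Aux

/-- For `d ≥ 2`, the morphism `τ_d : 𝒜_(d+1)* → 𝒜_(d)*` with
`a_i ↦ a_i a_i` (1 ≤ i ≤ d) and `a_{d+1} ↦ a_1 a_2 ⋯ a_d` is recognizable in every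
subshift `X ⊆ 𝒜_(d+1)^ℤ` not containing any of the periodic words `a_i^{±∞}`. -/
theorem tauMap_recognizable (d : ℕ) (hd : 2 ≤ d)
    (X : Set (ZWord (Fin (d+1)))) (hX : IsSubshift X)
    (hper : ∀ a : Fin (d+1), ((fun _ => a) : ZWord (Fin (d+1))) ∉ X) :
    @Recognizable (Fin (d+1)) (Fin d) ⟨⟨0, by omega⟩⟩ (tauMap d) X := by
  haveI hNE : Nonempty (Fin d) := ⟨⟨0, by omega⟩⟩
  intro x hx x' hx' k l hk hl heq
  have h1 := tauMap_one_le hd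
  have hsm := offset_strictMono (tauMap d) h1 x
  have hsm' := offset_strictMono (tauMap d) h1 x'
  set e : ℤ := (l : ℤ) - k with he
  have hz : ∀ j : ℤ, sigmaZ (tauMap d) x j = sigmaZ (tauMap d) x' (j + e) := by
    intro j
    have h := congrFun heq (j - k)
    rw [shift_iterate_apply, shift_iterate_apply] at h
    rw [show j - (k : ℤ) + k = j by ring] at h
    have harg : j - (k : ℤ) + l = j + e := by rw [he]; ring
    rw [← harg]
    exact h
  have h₁ : Decomp d (sigmaZ (tauMap d) x) x 0 := decomp_self hd x
  have h₂ : Decomp d (sigmaZ (tauMap d) x) x' e := decomp_of_eq hd hz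
  -- common cuts arbitrarily far to the left
  have hcc : ∀ P : ℤ, ∃ n n' : ℤ, offset (tauMap d) x n ≤ P ∧
      offset (tauMap d) x n = offset (tauMap d) x' n' - e := by
    intro P
    obtain ⟨p, hpP, hpinc⟩ := left_forced hd hX hper hx h₁ P
    have hc1 : ∃ n, offset (tauMap d) x n - 0 = p + 1 := by
      by_contra hno
      push_neg at hno
      exact hpinc (forced_cut hd h₁ p hno)
    have hc2 : ∃ n', offset (tauMap d) x' n' - e = p + 1 := by
      by_contra hno
      push_neg at hno
      exact hpinc (forced_cut hd h₂ p hno)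
    obtain ⟨n, hn⟩ := hc1
    obtain ⟨n', hn'⟩ := hc2
    exact ⟨n, n', by omega, by omega⟩
  -- Step A : e = 0
  have hkl : e = 0 := by
    obtain ⟨n, n', hnle, hcut⟩ := hcc (min 1 (1 - e))
    have hchain := prop_chain hd h₁ h₂
      (show offset (tauMap d) x n - 0 = offset (tauMap d) x' n' - e by omega)
    have hs2 := offset_succ (tauMap d) x 1
    rw [offset_one, show (1 : ℤ) + 1 = 2 by norm_num] at hs2
    have hs2' := offset_succ (tauMap d) x' 1
    rw [offset_one, show (1 : ℤ) + 1 = 2 by norm_num] at hs2'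
    -- e ≥ 0
    have hn'le : n' ≤ 1 := by
      apply hsm'.le_iff_le.mp
      rw [offset_one]
      omega
    have htv : n' + ((1 - n').toNat : ℤ) = 1 := by omega
    obtain ⟨hxeq, hoeq⟩ := hchain (1 - n').toNat
    rw [htv, offset_one] at hoeq
    have hmlt : n + ((1 - n').toNat : ℤ) < 2 := by
      by_contra hcon
      have : offset (tauMap d) x 2 ≤ offset (tauMap d) x (n + (1 - n').toNat) :=
        hsm.monotone (by omega)
      omega
    have hge : offset (tauMap d) x (n + ((1 - n').toNat : ℤ)) ≤ 1 := by
      have : offset (tauMap d) x (n + ((1 - n').toNat : ℤ)) ≤ offset (tauMap d) x 1 :=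
        hsm.monotone (by omega)
      rwa [offset_one] at this
    -- e ≤ 0
    have hnle1 : n ≤ 1 := by
      apply hsm.le_iff_le.mp
      rw [offset_one]
      omega
    have hsv : n + ((1 - n).toNat : ℤ) = 1 := by omega
    obtain ⟨hxeq2, hoeq2⟩ := hchain (1 - n).toNat
    rw [hsv, offset_one] at hoeq2
    have hm'lt : n' + ((1 - n).toNat : ℤ) < 2 := by
      by_contra hcon
      have : offset (tauMap d) x' 2 ≤ offset (tauMap d) x' (n' + (1 - n).toNat) :=
        hsm'.monotone (by omega)
      omega
    have hle : offset (tauMap d) x' (n' + ((1 - n).toNat : ℤ)) ≤ 1 := by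
      have : offset (tauMap d) x' (n' + ((1 - n).toNat : ℤ)) ≤ offset (tauMap d) x' 1 :=
        hsm'.monotone (by omega)
      rwa [offset_one] at this
    omega
  -- Step B : x = x'
  have hxx : x = x' := by
    funext j
    obtain ⟨n, n', hnle, hcut⟩ := hcc (min (offset (tauMap d) x j) 1)
    have hchain := prop_chain hd h₁ h₂
      (show offset (tauMap d) x n - 0 = offset (tauMap d) x' n' - e by omega)
    have hn1 : n ≤ 1 := by
      apply hsm.le_iff_le.mp
      rw [offset_one]
      omega
    have ht1 : n + (((1 - n).toNat : ℕ) : ℤ) = 1 := by omega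
    obtain ⟨_, hoeq⟩ := hchain (1 - n).toNat
    rw [ht1, offset_one] at hoeq
    have hoeq' : offset (tauMap d) x' (n' + ((1 - n).toNat : ℤ)) = offset (tauMap d) x' 1 := by
      rw [offset_one]
      omega
    have hidx : n' + (((1 - n).toNat : ℕ) : ℤ) = 1 := hsm'.injective hoeq'
    have hnn' : n' = n := by omega
    have hjn : n ≤ j := hsm.le_iff_le.mp (by omega)
    have ht2 : n + (((j - n).toNat : ℕ) : ℤ) = j := by omega
    have hfin := (hchain (j - n).toNat).1
    rw [hnn', ht2] at hfin
    exact hfin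
  refine ⟨hxx, by omega⟩

end SAdicPaper
end
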